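/- (Used in Section 6; cf. Prop. 2.6 of [ant-bal-semiframes1].) Let (X, μ) be a measure space, H a complex Hilbert space, and ψ, φ : X → H weakly measurable functions that are dual to each other: for all f, g ∈ H the function x ↦ ⟨f, ψ_x⟩⟨φ_x, g⟩ is μ-integrable and ∫_X ⟨f, ψ_x⟩⟨φ_x, g⟩ dμ(x) = ⟨f, g⟩. If ψ is an upper semi-frame, i.e. there is M > 0 with ∫_X |⟨f, ψ_x⟩|² dμ(x) ≤ M‖f‖² for all f ∈ H, then φ is a lower semi-frame: (1/M)‖g‖² ≤ ∫_X |⟨g, φ_x⟩|² dμ(x) for every g ∈ H, where the integral is taken in [0, ∞]. -/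

import Mathlib

open MeasureTheory
open scoped ENNReal NNReal

local notation "⟪" x ", " y "⟫" => @inner ℂ _ _ x y

/-- cf. Prop. 2.6 of [ant-bal-semiframes1]: If `ψ, φ` are weakly
measurable and dual to each other, `∫ ⟨f, ψ_x⟩⟨φ_x, g⟩ dμ = ⟨f, g⟩`, and `ψ` is an upper
semi-frame with bound `M`, i.e. `∫ |⟨f, ψ_x⟩|² dμ ≤ M‖f‖²`, then `φ` is a lower
semi-frame: `(1/M)‖g‖² ≤ ∫ |⟨g, φ_x⟩|² dμ` (integral in `[0,∞]`) for every `g`.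
Here `⟨f, ψ_x⟩ = ⟪ψ x, f⟫`, `⟨φ_x, g⟩ = ⟪g, φ x⟫`, `⟨g, φ_x⟩ = ⟪φ x, g⟫`. -/
theorem statement12
    {X : Type*} [MeasurableSpace X] (μ : Measure X)
    {H : Type*} [NormedAddCommGroup H] [InnerProductSpace ℂ H] [CompleteSpace H]
    (ψ φ : X → H)
    (hψmeas : ∀ f : H, Measurable fun x => ⟪ψ x, f⟫)
    (hφmeas : ∀ f : H, Measurable fun x => ⟪φ x, f⟫)
    (hdualint : ∀ f g : H, Integrable (fun x => ⟪ψ x, f⟫ * ⟪g, φ x⟫) μ)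
    (hdual : ∀ f g : H, ∫ x, ⟪ψ x, f⟫ * ⟪g, φ x⟫ ∂μ = ⟪g, f⟫)
    (M : ℝ) (hM : 0 < M)
    (hupper : ∀ f : H,
      ∫⁻ x, (‖⟪ψ x, f⟫‖₊ : ℝ≥0∞) ^ 2 ∂μ ≤ ENNReal.ofReal (M * ‖f‖ ^ 2)) :
    ∀ g : H,
      ENNReal.ofReal ((1 / M) * ‖g‖ ^ 2) ≤ ∫⁻ x, (‖⟪φ x, g⟫‖₊ : ℝ≥0∞) ^ 2 ∂μ := by
  intro g
  by_cases hg : g = 0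
  · simp [hg]
  set I := ∫⁻ x, (‖⟪φ x, g⟫‖₊ : ℝ≥0∞) ^ 2 ∂μ with hI
  -- ‖g‖² ≤ ∫ ‖⟪ψ x, g⟫‖ * ‖⟪g, φ x⟫‖
  have hnorm_eq : ∀ x : X, (‖⟪g, φ x⟫‖₊ : ℝ≥0∞) = ‖⟪φ x, g⟫‖₊ := by
    intro x
    rw [(inner_conj_symm g (φ x)).symm, RCLike.nnnorm_conj]
  have h1 : ENNReal.ofReal (‖g‖ ^ 2) ≤
      ∫⁻ x, (‖⟪ψ x, g⟫‖₊ : ℝ≥0∞) * ‖⟪φ x, g⟫‖₊ ∂μ := by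
    have := enorm_integral_le_lintegral_enorm (μ := μ)
      (fun x => ⟪ψ x, g⟫ * ⟪g, φ x⟫)
    rw [hdual g g] at this
    have hgg : (‖(⟪g, g⟫ : ℂ)‖₊ : ℝ≥0∞) = ENNReal.ofReal (‖g‖ ^ 2) := by
      rw [inner_self_eq_norm_sq_to_K, ← enorm_eq_nnnorm, ← ofReal_norm]
      congr 1
      simp
    calc ENNReal.ofReal (‖g‖ ^ 2) = (‖(⟪g, g⟫ : ℂ)‖₊ : ℝ≥0∞) := hgg.symm
      _ ≤ ∫⁻ x, ‖⟪ψ x, g⟫ * ⟪g, φ x⟫‖₊ ∂μ := this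
      _ = ∫⁻ x, (‖⟪ψ x, g⟫‖₊ : ℝ≥0∞) * ‖⟪φ x, g⟫‖₊ ∂μ := by
          refine lintegral_congr fun x => ?_
          rw [nnnorm_mul, ENNReal.coe_mul, hnorm_eq]
  -- Cauchy–Schwarz
  have h2 : ∫⁻ x, (‖⟪ψ x, g⟫‖₊ : ℝ≥0∞) * ‖⟪φ x, g⟫‖₊ ∂μ ≤
      (∫⁻ x, (‖⟪ψ x, g⟫‖₊ : ℝ≥0∞) ^ 2 ∂μ) ^ ((1:ℝ)/2) * I ^ ((1:ℝ)/2) := by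
    have hpq : Real.HolderConjugate 2 2 := Real.HolderConjugate.two_two
    have hf : AEMeasurable (fun x => (‖⟪ψ x, g⟫‖₊ : ℝ≥0∞)) μ :=
      ((hψmeas g).nnnorm.coe_nnreal_ennreal).aemeasurable
    have hg' : AEMeasurable (fun x => (‖⟪φ x, g⟫‖₊ : ℝ≥0∞)) μ :=
      ((hφmeas g).nnnorm.coe_nnreal_ennreal).aemeasurable
    have := ENNReal.lintegral_mul_le_Lp_mul_Lq μ hpq hf hg'
    simp only [ENNReal.rpow_two] at this
    exact this
  have h3 : (∫⁻ x, (‖⟪ψ x, g⟫‖₊ : ℝ≥0∞) ^ 2 ∂μ) ^ ((1:ℝ)/2) ≤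
      (ENNReal.ofReal (M * ‖g‖ ^ 2)) ^ ((1:ℝ)/2) :=
    ENNReal.rpow_le_rpow (hupper g) (by norm_num)
  have h4 : ENNReal.ofReal (‖g‖ ^ 2) ≤
      (ENNReal.ofReal (M * ‖g‖ ^ 2)) ^ ((1:ℝ)/2) * I ^ ((1:ℝ)/2) :=
    h1.trans (h2.trans (mul_le_mul_left h3 _))
  -- square both sides
  have h5 : (ENNReal.ofReal (‖g‖ ^ 2)) ^ 2 ≤ ENNReal.ofReal (M * ‖g‖ ^ 2) * I := by
    calc (ENNReal.ofReal (‖g‖ ^ 2)) ^ 2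
        ≤ ((ENNReal.ofReal (M * ‖g‖ ^ 2)) ^ ((1:ℝ)/2) * I ^ ((1:ℝ)/2)) ^ 2 :=
          pow_le_pow_left' h4 2
      _ = ENNReal.ofReal (M * ‖g‖ ^ 2) * I := by
          rw [mul_pow, ← ENNReal.rpow_natCast _ 2, ← ENNReal.rpow_natCast _ 2,
            ← ENNReal.rpow_mul, ← ENNReal.rpow_mul]
          norm_num
  have hMg : ENNReal.ofReal (M * ‖g‖ ^ 2) ≠ 0 := by
    simp only [ne_eq, ENNReal.ofReal_eq_zero, not_le]
    have : 0 < ‖g‖ := norm_pos_iff.mpr hg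
    positivity
  have hMg' : ENNReal.ofReal (M * ‖g‖ ^ 2) ≠ ∞ := ENNReal.ofReal_ne_top
  rw [← ENNReal.mul_le_mul_iff_right hMg hMg']
  refine le_trans (le_of_eq ?_) h5
  rw [← ENNReal.ofReal_mul (by positivity), ← ENNReal.ofReal_pow (by positivity)]
  congr 1
  field_simp
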